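/- Lemma 4.3: Let ℓ be a line in ℝ² and A a point with A ∉ ℓ, and let G = {P : dist(P, A) = infDist(P, ℓ)} be the parabola with focus A and directrix ℓ. Let F₁ ≠ F₂ be points of ℝ² and let a ∈ ℝ satisfy 0 < 2a < dist(F₁, F₂), and let H = {P : |dist(P, F₁) − dist(P, F₂)| = 2a} be the (non-degenerate) hyperbola with foci F₁, F₂. If H ∩ G = ∅, then no point of H is strictly inside G; i.e. every P ∈ H satisfies dist(P, A) ≥ infDist(P, ℓ). -/

import Mathlib

open Metric Real

noncomputable def myrot (v : EuclideanSpace ℝ (Fin 2)) : EuclideanSpace ℝ (Fin 2) :=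
  WithLp.toLp 2 ![-(v 1), v 0]

lemma myrot_apply0 (v : EuclideanSpace ℝ (Fin 2)) : myrot v 0 = -(v 1) := rfl
lemma myrot_apply1 (v : EuclideanSpace ℝ (Fin 2)) : myrot v 1 = v 0 := rfl

lemma inner2 (u v : EuclideanSpace ℝ (Fin 2)) : (inner ℝ u v : ℝ) = u 0 * v 0 + u 1 * v 1 := by
  simp [PiLp.inner_apply, Fin.sum_univ_two]; ring

lemma inner_myrot_myrot (u v : EuclideanSpace ℝ (Fin 2)) :
    (inner ℝ (myrot u) (myrot v) : ℝ) = inner ℝ u v := by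
  simp [inner2, myrot_apply0, myrot_apply1]; ring

lemma inner_myrot_self (v : EuclideanSpace ℝ (Fin 2)) : (inner ℝ v (myrot v) : ℝ) = 0 := by
  simp [inner2, myrot_apply0, myrot_apply1]; ring

lemma norm_myrot (v : EuclideanSpace ℝ (Fin 2)) : ‖myrot v‖ = ‖v‖ := by
  rw [← Real.sqrt_sq (norm_nonneg (myrot v)), ← Real.sqrt_sq (norm_nonneg v)]
  rw [← real_inner_self_eq_norm_sq, ← real_inner_self_eq_norm_sq, inner_myrot_myrot]

lemma span2 (d : EuclideanSpace ℝ (Fin 2)) (hd : ‖d‖ = 1) (v : EuclideanSpace ℝ (Fin 2)) :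
    v = (inner ℝ v d : ℝ) • d + (inner ℝ v (myrot d) : ℝ) • myrot d := by
  have h1 : d 0 ^ 2 + d 1 ^ 2 = 1 := by
    have := real_inner_self_eq_norm_sq d
    rw [inner2, hd] at this; nlinarith
  ext i
  fin_cases i <;>
    simp only [Fin.mk_zero, Fin.mk_one, inner2, myrot_apply0, myrot_apply1, PiLp.add_apply, PiLp.smul_apply, smul_eq_mul]
  · linear_combination (-(v 0)) * h1
  · linear_combination (-(v 1)) * h1


lemma norm_comb (e n : EuclideanSpace ℝ (Fin 2)) (he : ‖e‖ = 1) (hn : ‖n‖ = 1)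
    (hen : (inner ℝ e n : ℝ) = 0) (x y : ℝ) :
    ‖x • e + y • n‖ = Real.sqrt (x^2 + y^2) := by
  have h : ‖x • e + y • n‖^2 = x^2 + y^2 := by
    rw [norm_add_sq_real, norm_smul, norm_smul, real_inner_smul_left, real_inner_smul_right,
      hen, he, hn]
    simp [mul_pow, sq_abs]
  rw [← h, Real.sqrt_sq (norm_nonneg _)]

set_option maxHeartbeats 10000000 in
lemma key (ℓ : AffineSubspace ℝ (EuclideanSpace ℝ (Fin 2)))
    (hℓ : Module.finrank ℝ ℓ.direction = 1)
    (A F₁ F₂ : EuclideanSpace ℝ (Fin 2)) (a : ℝ) (ha : 0 < a)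
    (ha' : 2*a < dist F₁ F₂) (P₀ : EuclideanSpace ℝ (Fin 2))
    (hP₀ : dist P₀ F₁ - dist P₀ F₂ = 2*a)
    (hin : dist P₀ A < Metric.infDist P₀ (ℓ : Set (EuclideanSpace ℝ (Fin 2)))) :
    ∃ P, dist P F₁ - dist P F₂ = 2*a ∧
      dist P A = Metric.infDist P (ℓ : Set (EuclideanSpace ℝ (Fin 2))) := by
  set c : ℝ := dist F₁ F₂ / 2 with hc_def
  have hc : 0 < c := by
    have h0 := dist_nonneg (x := F₁) (y := F₂); simp only [hc_def]; linarith
  have hac : a < c := by simp only [hc_def]; linarith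
  set b : ℝ := Real.sqrt (c^2 - a^2) with hb_def
  have hb2 : b^2 = c^2 - a^2 := Real.sq_sqrt (by nlinarith)
  have hb : 0 < b := Real.sqrt_pos.mpr (by nlinarith)
  -- unit vector from F₁ to F₂
  obtain ⟨e, he_def⟩ : ∃ e : EuclideanSpace ℝ (Fin 2), e = (dist F₁ F₂)⁻¹ • (F₂ - F₁) := ⟨_, rfl⟩
  have hdist_pos : (0:ℝ) < dist F₁ F₂ := by linarith
  have he : ‖e‖ = 1 := by
    rw [he_def, norm_smul, norm_inv, Real.norm_eq_abs, abs_of_pos hdist_pos,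
      ← dist_eq_norm, dist_comm F₂ F₁]
    field_simp
  obtain ⟨n, hn_def⟩ : ∃ n : EuclideanSpace ℝ (Fin 2), n = myrot e := ⟨_, rfl⟩
  have hn : ‖n‖ = 1 := by rw [hn_def, norm_myrot, he]
  have hen : (inner ℝ e n : ℝ) = 0 := by rw [hn_def]; exact inner_myrot_self e
  have hF21 : F₂ - F₁ = (2*c) • e := by
    rw [he_def, smul_smul]
    have h : 2*c*(dist F₁ F₂)⁻¹ = 1 := by rw [hc_def]; field_simp
    rw [h, one_smul]
  -- the branch parametrization
  set P : ℝ → EuclideanSpace ℝ (Fin 2) :=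
    fun s => F₁ + ((a * Real.cosh s + c) • e + (b * Real.sinh s) • n) with hP_def
  have hsub1 : ∀ s, P s - F₁ = (a * Real.cosh s + c) • e + (b * Real.sinh s) • n := by
    intro s; rw [hP_def]; exact add_sub_cancel_left _ _
  have hsub2 : ∀ s, P s - F₂ = (a * Real.cosh s - c) • e + (b * Real.sinh s) • n := by
    intro s
    have : P s - F₂ = (P s - F₁) - (F₂ - F₁) := by abel
    rw [this, hsub1, hF21]
    module
  have hcosh_pos : ∀ s : ℝ, 1 ≤ Real.cosh s := fun s => Real.one_le_cosh s
  have hdist1 : ∀ s, dist (P s) F₁ = c * Real.cosh s + a := by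
    intro s
    rw [dist_eq_norm, hsub1, norm_comb e n he hn hen]
    have hsq : (a * Real.cosh s + c)^2 + (b * Real.sinh s)^2 = (c * Real.cosh s + a)^2 := by
      linear_combination (Real.cosh s^2 - 1) * hb2 - b^2 * (Real.cosh_sq s)
    rw [hsq, Real.sqrt_sq (by nlinarith [mul_le_mul_of_nonneg_left (hcosh_pos s) hc.le])]
  have hdist2 : ∀ s, dist (P s) F₂ = c * Real.cosh s - a := by
    intro s
    rw [dist_eq_norm, hsub2, norm_comb e n he hn hen]
    have hsq : (a * Real.cosh s - c)^2 + (b * Real.sinh s)^2 = (c * Real.cosh s - a)^2 := by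
      linear_combination (Real.cosh s^2 - 1) * hb2 - b^2 * (Real.cosh_sq s)
    rw [hsq, Real.sqrt_sq (by nlinarith [mul_le_mul_of_nonneg_left (hcosh_pos s) hc.le])]
  have honH : ∀ s, dist (P s) F₁ - dist (P s) F₂ = 2*a := by
    intro s; rw [hdist1, hdist2]; ring
  -- P₀ lies on the parametrized branch
  obtain ⟨s₀, hs₀⟩ : ∃ s₀, P s₀ = P₀ := by
    set u : EuclideanSpace ℝ (Fin 2) := P₀ - F₁ with hu_def
    set x' : ℝ := inner ℝ u e with hx'_def
    set y : ℝ := inner ℝ u n with hy_def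
    have hu : u = x' • e + y • n := by
      rw [hx'_def, hy_def, hn_def]; exact span2 e he u
    set x : ℝ := x' - c with hx_def
    have hd1 : dist P₀ F₁ = Real.sqrt ((x+c)^2 + y^2) := by
      rw [dist_eq_norm, ← hu_def, hu, norm_comb e n he hn hen]
      have : x + c = x' := by rw [hx_def]; ring
      rw [this]
    have hd2 : dist P₀ F₂ = Real.sqrt ((x-c)^2 + y^2) := by
      have : P₀ - F₂ = (x' - 2*c) • e + y • n := by
        have h1 : P₀ - F₂ = u - (F₂ - F₁) := by rw [hu_def]; abel
        rw [h1, hu, hF21]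
        module
      rw [dist_eq_norm, this, norm_comb e n he hn hen]
      have hxx : x' - 2*c = x - c := by rw [hx_def]; ring
      rw [hxx]
    have hd1n : 0 ≤ dist P₀ F₁ := dist_nonneg
    have hd2n : 0 ≤ dist P₀ F₂ := dist_nonneg
    have hd1sq : dist P₀ F₁ ^ 2 = (x+c)^2 + y^2 := by
      rw [hd1, Real.sq_sqrt (by positivity)]
    have hd2sq : dist P₀ F₂ ^ 2 = (x-c)^2 + y^2 := by
      rw [hd2, Real.sq_sqrt (by positivity)]
    -- derive focal coordinates
    have hsum : dist P₀ F₂ = (c*x - a^2)/a := by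
      have h1 : dist P₀ F₁ = dist P₀ F₂ + 2*a := by linarith
      have h2 : dist P₀ F₁ ^2 - dist P₀ F₂ ^2 = 4*c*x := by rw [hd1sq, hd2sq]; ring
      rw [h1] at h2
      field_simp
      linear_combination h2/4
    have hx_pos : 0 < x := by
      have := hsum ▸ hd2n
      rw [le_div_iff₀ ha] at this
      nlinarith
    have hhyp : b^2 * x^2 = a^2 * b^2 + a^2 * y^2 := by
      have h3 : ((c*x - a^2)/a)^2 = (x-c)^2 + y^2 := by rw [← hsum, hd2sq]
      have h4 : (c*x - a^2)^2 = a^2 * ((x-c)^2 + y^2) := by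
        field_simp at h3; linear_combination h3
      linear_combination h4 + (x^2 - a^2) * hb2
    refine ⟨Real.arsinh (y/b), ?_⟩
    have hsinh : b * Real.sinh (Real.arsinh (y/b)) = y := by
      rw [Real.sinh_arsinh]; field_simp
    have hcosh : a * Real.cosh (Real.arsinh (y/b)) = x := by
      rw [Real.cosh_arsinh]
      have h5 : (a * Real.sqrt (1 + (y/b)^2))^2 = x^2 := by
        rw [mul_pow, Real.sq_sqrt (by positivity)]
        field_simp
        nlinarith [hhyp]
      have h6 : 0 < a * Real.sqrt (1 + (y/b)^2) := by positivity
      nlinarith [h5, h6, hx_pos]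
    rw [hP_def]
    simp only
    rw [hcosh, hsinh]
    have : x + c = x' := by rw [hx_def]; ring
    rw [this, ← hu]
    rw [hu_def]; abel
  -- directrix data
  have hdir_ne : ℓ.direction ≠ ⊥ := by
    intro h; rw [h] at hℓ; simp at hℓ
  have hQne : (ℓ : Set (EuclideanSpace ℝ (Fin 2))).Nonempty := by
    by_contra hemp
    rw [Set.not_nonempty_iff_eq_empty, AffineSubspace.coe_eq_bot_iff] at hemp
    rw [hemp, AffineSubspace.direction_bot] at hdir_ne
    exact hdir_ne rfl
  obtain ⟨Q, hQmem⟩ := hQne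
  obtain ⟨v, hv_mem, hv_ne⟩ := Submodule.exists_mem_ne_zero_of_ne_bot hdir_ne
  obtain ⟨d, hd_def⟩ : ∃ d : EuclideanSpace ℝ (Fin 2), d = ‖v‖⁻¹ • v := ⟨_, rfl⟩
  have hd_mem : d ∈ ℓ.direction := by rw [hd_def]; exact Submodule.smul_mem _ _ hv_mem
  have hd : ‖d‖ = 1 := by rw [hd_def]; exact norm_smul_inv_norm hv_ne
  obtain ⟨m, hm_def⟩ : ∃ m : EuclideanSpace ℝ (Fin 2), m = myrot d := ⟨_, rfl⟩
  have hm : ‖m‖ = 1 := by rw [hm_def, norm_myrot, hd]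
  have hdm : (inner ℝ d m : ℝ) = 0 := by rw [hm_def]; exact inner_myrot_self d
  -- distance to the line is bounded by the normal component
  have hbound : ∀ X : EuclideanSpace ℝ (Fin 2),
      Metric.infDist X (ℓ : Set (EuclideanSpace ℝ (Fin 2))) ≤ |(inner ℝ (X - Q) m : ℝ)| := by
    intro X
    have hQ' : ((inner ℝ (X - Q) d : ℝ) • d +ᵥ Q) ∈ ℓ :=
      AffineSubspace.vadd_mem_of_mem_direction (Submodule.smul_mem _ _ hd_mem) hQmem
    refine le_trans (Metric.infDist_le_dist_of_mem hQ') ?_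
    rw [dist_eq_norm]
    have hspan : X - Q = (inner ℝ (X - Q) d : ℝ) • d + (inner ℝ (X - Q) m : ℝ) • m := by
      rw [hm_def]; exact span2 d hd (X - Q)
    have hXQ : X - ((inner ℝ (X - Q) d : ℝ) • d +ᵥ Q) = (inner ℝ (X - Q) m : ℝ) • m := by
      have h1 : X - ((inner ℝ (X - Q) d : ℝ) • d +ᵥ Q)
          = (X - Q) - (inner ℝ (X - Q) d : ℝ) • d := by
        rw [vadd_eq_add]; abel
      rw [h1]
      nth_rewrite 1 [hspan]
      abel
    rw [hXQ, norm_smul, hm, Real.norm_eq_abs, mul_one]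
  set β : ℝ := inner ℝ e m with hβ_def
  set γ : ℝ := inner ℝ n m with hγ_def
  have hβγ : β^2 + γ^2 = 1 := by
    have hspan : e = (inner ℝ e d : ℝ) • d + (inner ℝ e m : ℝ) • m := by
      rw [hm_def]; exact span2 d hd e
    have h1 : ‖e‖ = Real.sqrt ((inner ℝ e d : ℝ)^2 + (inner ℝ e m : ℝ)^2) := by
      nth_rewrite 1 [hspan]
      exact norm_comb d m hd hm hdm _ _
    rw [he] at h1
    have h2 : (inner ℝ e d : ℝ)^2 + (inner ℝ e m : ℝ)^2 = 1 := by
      have := Real.sqrt_eq_one.mp h1.symm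
      exact this
    have h3 : γ = (inner ℝ e d : ℝ) := by
      rw [hγ_def, hn_def, hm_def, inner_myrot_myrot]
    rw [hβ_def, h3]; linarith [h2]
  obtain ⟨σ, hσ, hσ2⟩ : ∃ σ : ℝ, (σ = 1 ∨ σ = -1) ∧
      (a*β + σ*(b*γ))^2 ≤ a^2*β^2 + b^2*γ^2 := by
    rcases le_or_gt (a*β*(b*γ)) 0 with h | h
    · exact ⟨1, Or.inl rfl, by nlinarith⟩
    · exact ⟨-1, Or.inr rfl, by nlinarith⟩
  have hM : a^2*β^2 + b^2*γ^2 < c^2 := by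
    rcases le_or_gt (β^2) (1/2) with h | h
    · nlinarith [sq_nonneg β, sq_nonneg γ, mul_pos ha ha, mul_pos hb hb]
    · nlinarith [sq_nonneg β, sq_nonneg γ, mul_pos ha ha, mul_pos hb hb]
  set r : ℝ := |a*β + σ*(b*γ)| with hr_def
  have hrc : r < c := by
    have h1 : r^2 ≤ a^2*β^2 + b^2*γ^2 := by rw [hr_def, sq_abs]; exact hσ2
    nlinarith [abs_nonneg (a*β + σ*(b*γ)), hc]
  set C : ℝ := |a*β - σ*(b*γ)| with hC_def
  set α' : ℝ := (inner ℝ (F₁ - Q) m : ℝ) + c*β with hα_def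
  have hinner : ∀ s, (inner ℝ (P s - Q) m : ℝ)
      = α' + (a*β)*Real.cosh s + (b*γ)*Real.sinh s := by
    intro s
    have h1 : P s - Q = (F₁ - Q) + ((a * Real.cosh s + c) • e + (b * Real.sinh s) • n) := by
      rw [hP_def]; exact add_sub_right_comm _ _ _
    rw [h1, inner_add_left, inner_add_left, real_inner_smul_left, real_inner_smul_left,
      hα_def, hβ_def, hγ_def]
    ring
  set K : ℝ := dist F₁ A + |α'| + C - a with hK_def
  have hgrow : ∀ t : ℝ, 0 ≤ t →
      (c - r)/2 * Real.exp t - K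
        ≤ dist (P (σ*t)) A - Metric.infDist (P (σ*t)) (ℓ : Set (EuclideanSpace ℝ (Fin 2))) := by
    intro t ht
    have hcosh_st : Real.cosh (σ*t) = Real.cosh t := by
      rcases hσ with h|h <;> rw [h] <;> simp [Real.cosh_neg]
    have hsinh_st : Real.sinh (σ*t) = σ * Real.sinh t := by
      rcases hσ with h|h <;> rw [h] <;> simp [Real.sinh_neg]
    have h1 : c * Real.cosh t + a - dist F₁ A ≤ dist (P (σ*t)) A := by
      have h0 := dist_triangle (P (σ*t)) A F₁
      rw [dist_comm A F₁] at h0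
      have h0' := hdist1 (σ*t)
      rw [hcosh_st] at h0'
      linarith
    have h2 : Metric.infDist (P (σ*t)) (ℓ : Set (EuclideanSpace ℝ (Fin 2)))
        ≤ |α'| + r * Real.exp t / 2 + C := by
      refine (hbound _).trans ?_
      rw [hinner, hcosh_st, hsinh_st]
      have heq : (a*β)*Real.cosh t + (b*γ)*(σ*Real.sinh t)
          = (a*β + σ*(b*γ))*Real.exp t/2 + (a*β - σ*(b*γ))*Real.exp (-t)/2 := by
        rw [Real.cosh_eq, Real.sinh_eq]; ring
      have h3 : |α' + ((a*β)*Real.cosh t + (b*γ)*(σ*Real.sinh t))|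
          ≤ |α'| + |(a*β)*Real.cosh t + (b*γ)*(σ*Real.sinh t)| := abs_add_le _ _
      have h4 : |(a*β)*Real.cosh t + (b*γ)*(σ*Real.sinh t)|
          ≤ r * Real.exp t / 2 + C := by
        rw [heq]
        refine (abs_add_le _ _).trans ?_
        have h5 : |(a*β + σ*(b*γ))*Real.exp t/2| = r * Real.exp t / 2 := by
          rw [abs_div, abs_mul, abs_of_pos (Real.exp_pos t)]
          simp [hr_def]
        have h6 : |(a*β - σ*(b*γ))*Real.exp (-t)/2| ≤ C := by
          rw [abs_div, abs_mul, abs_of_pos (Real.exp_pos (-t))]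
          have h7 : Real.exp (-t) ≤ 1 := Real.exp_le_one_iff.mpr (by linarith)
          have h8 : (0:ℝ) ≤ C := abs_nonneg _
          rw [hC_def]
          have h9 : |a*β - σ*(b*γ)| * Real.exp (-t) ≤ |a*β - σ*(b*γ)| * 1 :=
            mul_le_mul_of_nonneg_left h7 (abs_nonneg _)
          simp at h9 ⊢
          linarith [h9]
        linarith [h5, h6]
      have h10 : |α' + ((a*β)*Real.cosh t + (b*γ)*(σ*Real.sinh t))|
          ≤ |α'| + (r * Real.exp t / 2 + C) := le_trans h3 (by linarith)
      calc |α' + (a*β)*Real.cosh t + (b*γ)*(σ*Real.sinh t)|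
          = |α' + ((a*β)*Real.cosh t + (b*γ)*(σ*Real.sinh t))| := by ring_nf
        _ ≤ |α'| + r * Real.exp t / 2 + C := by linarith [h10]
    have hcosh_ge : Real.exp t / 2 ≤ Real.cosh t := by
      rw [Real.cosh_eq]
      have := Real.exp_pos (-t)
      linarith
    have hcr2 : 0 < c - r := by linarith
    have h11 : (c - r)/2 * Real.exp t ≤ c * Real.cosh t - r * Real.exp t / 2 := by
      have h12 : c * (Real.exp t / 2) ≤ c * Real.cosh t :=
        mul_le_mul_of_nonneg_left hcosh_ge hc.le
      linarith
    rw [hK_def]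
    linarith
  -- choose a far parameter
  set t₀ : ℝ := max (2*(K+1)/(c-r)) 0 with ht₀_def
  have ht₀ : 0 ≤ t₀ := le_max_right _ _
  have hcr : 0 < c - r := by linarith
  have hexp_t₀ : 2*(K+1)/(c-r) ≤ Real.exp t₀ := by
    have h1 : 2*(K+1)/(c-r) ≤ t₀ := le_max_left _ _
    have h2 : t₀ + 1 ≤ Real.exp t₀ := Real.add_one_le_exp t₀
    linarith
  have hK1 : K + 1 ≤ (c-r)/2 * Real.exp t₀ := by
    have h1 : 2*(K+1) ≤ Real.exp t₀ * (c-r) := (div_le_iff₀ hcr).mp hexp_t₀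
    linarith
  -- the intermediate value argument
  set g : ℝ → ℝ := fun s => dist (P s) A
      - Metric.infDist (P s) (ℓ : Set (EuclideanSpace ℝ (Fin 2))) with hg_def
  have hPc : Continuous P := by
    rw [hP_def]
    fun_prop
  have hgc : Continuous g := by
    rw [hg_def]
    exact (hPc.dist continuous_const).sub ((Metric.continuous_infDist_pt _).comp hPc)
  have hg0 : g s₀ < 0 := by rw [hg_def]; simp only; rw [hs₀]; linarith
  have hgT : 0 < g (σ*t₀) := by
    have := hgrow t₀ ht₀
    rw [hg_def]; simp only
    linarith
  have h0mem : (0:ℝ) ∈ Set.uIcc (g s₀) (g (σ*t₀)) :=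
    Set.mem_uIcc.mpr (Or.inl ⟨hg0.le, hgT.le⟩)
  obtain ⟨s', -, hs'⟩ := intermediate_value_uIcc (hgc.continuousOn) h0mem
  refine ⟨P s', honH s', ?_⟩
  have : dist (P s') A - Metric.infDist (P s') (ℓ : Set (EuclideanSpace ℝ (Fin 2))) = 0 := hs'
  linarith

/-- Lemma 4.3: if a non-degenerate hyperbola `H` (foci `F₁ ≠ F₂`, parameter `a` with
`0 < 2a < dist(F₁, F₂)`) does not intersect the parabola `G` with focus `A` and
directrix `ℓ`, then no point of `H` is strictly inside `G`: every `P ∈ H` satisfies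
`dist(P, A) ≥ infDist(P, ℓ)`. -/
theorem statement16 (ℓ : AffineSubspace ℝ (EuclideanSpace ℝ (Fin 2)))
    (hℓ : Module.finrank ℝ ℓ.direction = 1)
    (A : EuclideanSpace ℝ (Fin 2)) (hA : A ∉ ℓ)
    (F₁ F₂ : EuclideanSpace ℝ (Fin 2)) (hF : F₁ ≠ F₂)
    (a : ℝ) (ha : 0 < 2*a) (ha' : 2*a < dist F₁ F₂)
    (G H : Set (EuclideanSpace ℝ (Fin 2)))
    (hG : G = {P | dist P A = Metric.infDist P (ℓ : Set (EuclideanSpace ℝ (Fin 2)))})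
    (hH : H = {P | |dist P F₁ - dist P F₂| = 2*a})
    (hdisj : H ∩ G = ∅) :
    ∀ P ∈ H, Metric.infDist P (ℓ : Set (EuclideanSpace ℝ (Fin 2))) ≤ dist P A := by
  intro P₀ hP₀mem
  by_contra hlt
  push_neg at hlt
  have ha0 : 0 < a := by linarith
  rw [hH] at hP₀mem
  have habs : |dist P₀ F₁ - dist P₀ F₂| = 2*a := hP₀mem
  have hsep : ∀ P, P ∈ H → P ∈ G → False := by
    intro P h1 h2
    have : P ∈ H ∩ G := ⟨h1, h2⟩
    rw [hdisj] at this
    exact this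
  rcases (abs_eq (by linarith : (0:ℝ) ≤ 2*a)).mp habs with hcase | hcase
  · obtain ⟨P, hP1, hP2⟩ := key ℓ hℓ A F₁ F₂ a ha0 ha' P₀ hcase hlt
    refine hsep P ?_ (by rw [hG]; exact hP2)
    rw [hH]
    show |dist P F₁ - dist P F₂| = 2*a
    rw [hP1, abs_of_pos (by linarith)]
  · obtain ⟨P, hP1, hP2⟩ := key ℓ hℓ A F₂ F₁ a ha0 (by rwa [dist_comm]) P₀
      (by linarith) hlt
    refine hsep P ?_ (by rw [hG]; exact hP2)
    rw [hH]
    show |dist P F₁ - dist P F₂| = 2*a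
    rw [show dist P F₁ - dist P F₂ = -(dist P F₂ - dist P F₁) by ring, abs_neg, hP1,
      abs_of_pos (by linarith)]
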